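/- The anti-diagonal of ℂP¹ × ℂP¹ is mapped by Π two-to-one onto the standard ℝP² ⊂ ℂP². Precisely, for u = (u₁,u₂) ∈ ℂ² nonzero set σ(u) = (−ū₂, ū₁). Then: (i) Π(u, σ(u)) is a nonzero vector all three of whose coordinates are real; (ii) for every nonzero real x ∈ ℝ³ there is a nonzero u ∈ ℂ² with [Π(u,σ(u))] = [x] in ℂP²; and (iii) for nonzero u, u′ ∈ ℂ², [Π(u,σ(u))] = [Π(u′,σ(u′))] if and only if [u′] = [u] or [u′] = [σ(u)] in ℂP¹, and [σ(u)] ≠ [u], so each fiber has exactly two elements. -/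

import Mathlib

open ComplexConjugate

/-- The map `Π : ℂ² × ℂ² → ℂ³` inducing the 2-to-1 branched cover
`ℂP¹ × ℂP¹ → ℂP²` ramified over the conic `z₁² + z₂² + z₃² = 0`. -/
noncomputable def PiMap (u v : ℂ × ℂ) : ℂ × ℂ × ℂ :=
  (Complex.I * (u.1 * v.1 + u.2 * v.2), u.1 * v.1 - u.2 * v.2, u.1 * v.2 + u.2 * v.1)

/-- The antipodal map `σ(u) = (−ū₂, ū₁)` of `ℂ²`, covering the antipodal
involution of `ℂP¹`. -/
noncomputable def SigmaMap (u : ℂ × ℂ) : ℂ × ℂ := (-(conj u.2), conj u.1)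

/-- `[u] = [u']` in `ℂP¹`. -/
def ProjEq2 (u u' : ℂ × ℂ) : Prop := ∃ c : ℂ, c ≠ 0 ∧ u' = c • u

/-- `[z] = [z']` in `ℂP²`. -/
def ProjEq3 (z z' : ℂ × ℂ × ℂ) : Prop := ∃ c : ℂ, c ≠ 0 ∧ z' = c • z

/-- Inclusion `ℝ³ ⊆ ℂ³`. -/
noncomputable def RealVec3 (x : ℝ × ℝ × ℝ) : ℂ × ℂ × ℂ :=
  ((x.1 : ℂ), (x.2.1 : ℂ), (x.2.2 : ℂ))


private noncomputable def pvec (u : ℂ × ℂ) : ℝ × ℝ × ℝ :=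
  (2 * (u.1 * conj u.2).im, -2 * (u.1 * conj u.2).re,
    Complex.normSq u.1 - Complex.normSq u.2)

private lemma piReal (u : ℂ × ℂ) : PiMap u (SigmaMap u) = RealVec3 (pvec u) := by
  simp only [PiMap, SigmaMap, RealVec3, pvec, Prod.mk.injEq]
  refine ⟨?_, ?_, ?_⟩ <;>
  · apply Complex.ext <;>
      simp [Complex.mul_re, Complex.mul_im, Complex.normSq_apply] <;> ring

private lemma pvec_sq (u : ℂ × ℂ) :
    (pvec u).1^2 + (pvec u).2.1^2 + (pvec u).2.2^2
      = (Complex.normSq u.1 + Complex.normSq u.2)^2 := by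
  simp only [pvec, Complex.normSq_apply, Complex.mul_re, Complex.mul_im,
    Complex.conj_re, Complex.conj_im]
  ring

private lemma nsum_pos (u : ℂ × ℂ) (hu : u ≠ 0) :
    0 < Complex.normSq u.1 + Complex.normSq u.2 := by
  rcases eq_or_lt_of_le (add_nonneg (Complex.normSq_nonneg u.1)
      (Complex.normSq_nonneg u.2)) with h | h
  · exfalso; apply hu
    have h1 : Complex.normSq u.1 = 0 := by
      nlinarith [Complex.normSq_nonneg u.1, Complex.normSq_nonneg u.2]
    have h2 : Complex.normSq u.2 = 0 := by
      nlinarith [Complex.normSq_nonneg u.1, Complex.normSq_nonneg u.2]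
    exact Prod.ext (Complex.normSq_eq_zero.mp h1) (Complex.normSq_eq_zero.mp h2)
  · exact h

private lemma piMap_smul (a b : ℂ) (u v : ℂ × ℂ) :
    PiMap (a • u) (b • v) = (a * b) • PiMap u v := by
  simp only [PiMap, Prod.smul_fst, Prod.smul_snd, Prod.smul_mk, smul_eq_mul, Prod.mk.injEq]
  and_intros <;> ring

private lemma piMap_comm (u v : ℂ × ℂ) : PiMap u v = PiMap v u := by
  simp only [PiMap, Prod.mk.injEq]
  and_intros <;> ring

private lemma sigma_smul (a : ℂ) (u : ℂ × ℂ) :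
    SigmaMap (a • u) = (conj a) • SigmaMap u := by
  simp only [SigmaMap, Prod.smul_fst, Prod.smul_snd, smul_eq_mul, map_mul,
    Prod.mk.injEq, Prod.smul_mk]
  and_intros <;> first | ring | trivial

private lemma sigma_sigma (u : ℂ × ℂ) : SigmaMap (SigmaMap u) = -u := by
  simp [SigmaMap, Prod.ext_iff]

private lemma sigma_ne_zero (u : ℂ × ℂ) (hu : u ≠ 0) : SigmaMap u ≠ 0 := by
  simp only [SigmaMap, Prod.ext_iff, ne_eq, Prod.fst_zero, Prod.snd_zero,
    neg_eq_zero, map_eq_zero] at *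
  tauto

private lemma key (u v : ℂ × ℂ) (hu : u ≠ 0) (c : ℝ) (hc : 0 < c)
    (hw : v.1 * conj v.2 = (c : ℂ) * (u.1 * conj u.2))
    (h1 : Complex.normSq v.1 = c * Complex.normSq u.1)
    (h2 : Complex.normSq v.2 = c * Complex.normSq u.2) :
    ProjEq2 u v := by
  by_cases hu1 : u.1 = 0
  · have hu2 : u.2 ≠ 0 := fun h => hu (Prod.ext hu1 h)
    have hv1 : v.1 = 0 := by
      have : Complex.normSq v.1 = 0 := by rw [h1, hu1]; simp
      exact Complex.normSq_eq_zero.mp this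
    have hv2 : v.2 ≠ 0 := by
      intro h
      apply hu2
      have h' := h2; rw [h] at h'; simp at h'
      exact h'.resolve_left (ne_of_gt hc)
    exact ⟨v.2 / u.2, div_ne_zero hv2 hu2,
      Prod.ext (by simp [hv1, hu1]) (by simp only [Prod.smul_snd, smul_eq_mul]; field_simp)⟩
  · have hv1 : v.1 ≠ 0 := by
      intro h
      apply hu1
      have h' := h1; rw [h] at h'; simp at h'
      exact h'.resolve_left (ne_of_gt hc)
    refine ⟨v.1 / u.1, div_ne_zero hv1 hu1, Prod.ext (by simp only [Prod.smul_fst, smul_eq_mul]; field_simp) ?_⟩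
    -- goal : v.2 = (v.1 / u.1) • u.2  (second component)
    have hconj : conj v.1 * v.2 = (c:ℂ) * (conj u.1 * u.2) := by
      have := congrArg conj hw
      simp only [map_mul, Complex.conj_conj, Complex.conj_ofReal] at this
      linear_combination this
    have hn : v.1 * conj v.1 = (c:ℂ) * (u.1 * conj u.1) := by
      rw [Complex.mul_conj, Complex.mul_conj, h1]
      push_cast; ring
    have hcancel : conj v.1 * (v.2 * u.1 - v.1 * u.2) = 0 := by
      linear_combination u.1 * hconj - u.2 * hn
    have hcv1 : (conj v.1 : ℂ) ≠ 0 := by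
      simpa using hv1
    have := (mul_eq_zero.mp hcancel).resolve_left hcv1
    have h5 : v.2 * u.1 = v.1 * u.2 := by linear_combination this
    show v.2 = v.1 / u.1 * u.2
    field_simp
    linear_combination h5

private lemma forward (u v : ℂ × ℂ) (hu : u ≠ 0) (c : ℂ) (hc : c ≠ 0)
    (h : PiMap v (SigmaMap v) = c • PiMap u (SigmaMap u)) :
    ProjEq2 u v ∨ ProjEq2 (SigmaMap u) v := by
  rw [piReal, piReal] at h
  simp only [RealVec3, Prod.smul_mk, smul_eq_mul, Prod.mk.injEq] at h
  obtain ⟨h1, h2, h3⟩ := h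
  -- c is real
  have him1 : c.im * (pvec u).1 = 0 := by
    have := congrArg Complex.im h1
    rw [Complex.ofReal_im, Complex.mul_im, Complex.ofReal_im, Complex.ofReal_re] at this
    linarith
  have him2 : c.im * (pvec u).2.1 = 0 := by
    have := congrArg Complex.im h2
    rw [Complex.ofReal_im, Complex.mul_im, Complex.ofReal_im, Complex.ofReal_re] at this
    linarith
  have him3 : c.im * (pvec u).2.2 = 0 := by
    have := congrArg Complex.im h3
    rw [Complex.ofReal_im, Complex.mul_im, Complex.ofReal_im, Complex.ofReal_re] at this
    linarith
  have hcim : c.im = 0 := by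
    by_contra hne
    have e1 : (pvec u).1 = 0 := by
      rcases mul_eq_zero.mp him1 with h' | h'; exact absurd h' hne; exact h'
    have e2 : (pvec u).2.1 = 0 := by
      rcases mul_eq_zero.mp him2 with h' | h'; exact absurd h' hne; exact h'
    have e3 : (pvec u).2.2 = 0 := by
      rcases mul_eq_zero.mp him3 with h' | h'; exact absurd h' hne; exact h'
    have hp := pvec_sq u
    rw [e1, e2, e3] at hp
    nlinarith [nsum_pos u hu]
  have hcr : c = ((c.re : ℝ) : ℂ) := by
    apply Complex.ext <;> simp [hcim]
  set cr := c.re with hcrdef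
  have hcr0 : cr ≠ 0 := by
    intro h0
    apply hc
    rw [hcr, h0]; simp
  rw [hcr] at h1 h2 h3
  have r1 : (pvec v).1 = cr * (pvec u).1 := by exact_mod_cast h1
  have r2 : (pvec v).2.1 = cr * (pvec u).2.1 := by exact_mod_cast h2
  have r3 : (pvec v).2.2 = cr * (pvec u).2.2 := by exact_mod_cast h3
  have hsq : (Complex.normSq v.1 + Complex.normSq v.2)^2
      = cr^2 * (Complex.normSq u.1 + Complex.normSq u.2)^2 := by
    rw [← pvec_sq u, ← pvec_sq v, r1, r2, r3]; ring
  simp only [pvec] at r1 r2 r3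
  have hwc : v.1 * conj v.2 = (cr:ℂ) * (u.1 * conj u.2) := by
    apply Complex.ext
    · rw [Complex.re_ofReal_mul]
      linarith [r2]
    · rw [Complex.im_ofReal_mul]
      linarith [r1]
  have hSu := nsum_pos u hu
  have hSv : 0 ≤ Complex.normSq v.1 + Complex.normSq v.2 :=
    add_nonneg (Complex.normSq_nonneg _) (Complex.normSq_nonneg _)
  rcases lt_trichotomy cr 0 with hlt | heq | hgt
  · -- cr < 0 : the sigma branch
    right
    have hdpos : 0 < -cr := by linarith
    have hS : Complex.normSq v.1 + Complex.normSq v.2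
        = (-cr) * (Complex.normSq u.1 + Complex.normSq u.2) := by
      have h0 : ((Complex.normSq v.1 + Complex.normSq v.2)
          - (-cr) * (Complex.normSq u.1 + Complex.normSq u.2))
          * ((Complex.normSq v.1 + Complex.normSq v.2)
          + (-cr) * (Complex.normSq u.1 + Complex.normSq u.2)) = 0 := by
        linear_combination hsq
      rcases mul_eq_zero.mp h0 with h0 | h0
      · linarith
      · nlinarith
    have hN1 : Complex.normSq v.1 = (-cr) * Complex.normSq u.2 := by linarith
    have hN2 : Complex.normSq v.2 = (-cr) * Complex.normSq u.1 := by linarith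
    have hw' : v.1 * conj v.2 = ((-cr : ℝ):ℂ) * ((SigmaMap u).1 * conj (SigmaMap u).2) := by
      simp only [SigmaMap, Complex.conj_conj]
      push_cast
      linear_combination hwc
    have h1' : Complex.normSq v.1 = (-cr) * Complex.normSq (SigmaMap u).1 := by
      simpa [SigmaMap, Complex.normSq_conj] using hN1
    have h2' : Complex.normSq v.2 = (-cr) * Complex.normSq (SigmaMap u).2 := by
      simpa [SigmaMap, Complex.normSq_conj] using hN2
    exact key (SigmaMap u) v (sigma_ne_zero u hu) (-cr) hdpos hw' h1' h2'
  · exact absurd heq hcr0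
  · -- cr > 0 : the identity branch
    left
    have hS : Complex.normSq v.1 + Complex.normSq v.2
        = cr * (Complex.normSq u.1 + Complex.normSq u.2) := by
      have h0 : ((Complex.normSq v.1 + Complex.normSq v.2)
          - cr * (Complex.normSq u.1 + Complex.normSq u.2))
          * ((Complex.normSq v.1 + Complex.normSq v.2)
          + cr * (Complex.normSq u.1 + Complex.normSq u.2)) = 0 := by
        linear_combination hsq
      rcases mul_eq_zero.mp h0 with h0 | h0
      · linarith
      · nlinarith
    have hN1 : Complex.normSq v.1 = cr * Complex.normSq u.1 := by linarith
    have hN2 : Complex.normSq v.2 = cr * Complex.normSq u.2 := by linarith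
    exact key u v hu cr hgt hwc hN1 hN2

private lemma surj (x : ℝ × ℝ × ℝ) (hx : x ≠ 0) :
    ∃ u : ℂ × ℂ, u ≠ 0 ∧ ProjEq3 (PiMap u (SigmaMap u)) (RealVec3 x) := by
  obtain ⟨x₁, x₂, x₃⟩ := x
  simp only [Prod.mk.injEq, ne_eq, Prod.ext_iff, Prod.fst_zero, Prod.snd_zero, not_and] at hx
  have hq : 0 < x₁^2 + x₂^2 + x₃^2 := by
    rcases eq_or_lt_of_le (by positivity : (0:ℝ) ≤ x₁^2 + x₂^2 + x₃^2) with h | h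
    · exfalso
      have e1 : x₁ = 0 := by nlinarith
      have e2 : x₂ = 0 := by nlinarith
      have e3 : x₃ = 0 := by nlinarith
      exact hx e1 e2 e3
    · exact h
  set r := Real.sqrt (x₁^2 + x₂^2 + x₃^2) with hrdef
  have hr2 : r^2 = x₁^2 + x₂^2 + x₃^2 := Real.sq_sqrt (le_of_lt hq)
  have hrpos : 0 < r := Real.sqrt_pos.mpr hq
  by_cases hc : 0 < r + x₃
  · set s := Real.sqrt ((r + x₃)/2) with hsdef
    have hs2 : s^2 = (r + x₃)/2 := Real.sq_sqrt (by linarith)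
    have hspos : 0 < s := Real.sqrt_pos.mpr (by linarith)
    have hsne : s ≠ 0 := ne_of_gt hspos
    refine ⟨⟨(s : ℂ), ⟨-x₂/(2*s), -x₁/(2*s)⟩⟩, ?_, 1, one_ne_zero, ?_⟩
    · intro h
      rw [Prod.ext_iff] at h
      have := h.1
      simp only [Prod.fst_zero, Complex.ofReal_eq_zero] at this
      exact hsne this
    · rw [piReal, one_smul]
      simp only [RealVec3, pvec, Prod.mk.injEq]
      have hre : ((⟨(s:ℂ), ⟨-x₂/(2*s), -x₁/(2*s)⟩⟩ : ℂ × ℂ).1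
          * conj (⟨(s:ℂ), ⟨-x₂/(2*s), -x₁/(2*s)⟩⟩ : ℂ × ℂ).2) = ⟨-x₂/2, x₁/2⟩ := by
        apply Complex.ext <;>
          simp [Complex.mul_re, Complex.mul_im] <;> field_simp <;> ring
      refine ⟨?_, ?_, ?_⟩
      · rw [hre]; push_cast; ring
      · rw [hre]; push_cast; ring
      · norm_cast
        simp only [Complex.normSq_apply, Complex.ofReal_re, Complex.ofReal_im]
        field_simp
        nlinarith [hs2, hr2]
  · -- r + x₃ ≤ 0 : then x₁ = x₂ = 0, x₃ = -r
    push_neg at hc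
    have hx3 : x₃ = -r := by nlinarith
    have h12 : x₁^2 + x₂^2 = 0 := by nlinarith
    have e1 : x₁ = 0 := by nlinarith
    have e2 : x₂ = 0 := by nlinarith
    refine ⟨⟨0, 1⟩, by simp [Prod.ext_iff], (r : ℂ), ?_, ?_⟩
    · simp [Complex.ofReal_eq_zero]; linarith
    · rw [piReal]
      simp only [RealVec3, pvec, Complex.normSq_zero, Complex.normSq_one,
        Prod.smul_mk, smul_eq_mul, Prod.mk.injEq, e1, e2, hx3]
      norm_num

/-- The anti-diagonal `{(u, σ(u))}` of `ℂP¹ × ℂP¹` is mapped by `Π` two-to-one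
onto the standard `ℝP² ⊂ ℂP²`. -/
theorem stmt13 :
    -- (i) `Π(u, σ(u))` is a nonzero vector with all three coordinates real
    (∀ u : ℂ × ℂ, u ≠ 0 →
      PiMap u (SigmaMap u) ≠ 0 ∧
      (PiMap u (SigmaMap u)).1.im = 0 ∧
      (PiMap u (SigmaMap u)).2.1.im = 0 ∧
      (PiMap u (SigmaMap u)).2.2.im = 0) ∧
    -- (ii) every class of a nonzero real vector is in the image of the anti-diagonal
    (∀ x : ℝ × ℝ × ℝ, x ≠ 0 →
      ∃ u : ℂ × ℂ, u ≠ 0 ∧ ProjEq3 (PiMap u (SigmaMap u)) (RealVec3 x)) ∧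
    -- (iii) the fibers are exactly the pairs `{[u], [σ(u)]}`, and these two
    -- points of `ℂP¹` are always distinct, so each fiber has exactly two elements
    (∀ u u' : ℂ × ℂ, u ≠ 0 → u' ≠ 0 →
      (ProjEq3 (PiMap u (SigmaMap u)) (PiMap u' (SigmaMap u')) ↔
        (ProjEq2 u u' ∨ ProjEq2 (SigmaMap u) u'))) ∧
    (∀ u : ℂ × ℂ, u ≠ 0 → ¬ ProjEq2 u (SigmaMap u)) := by
  refine ⟨?_, surj, ?_, ?_⟩
  · -- (i)
    intro u hu
    refine ⟨?_, ?_, ?_, ?_⟩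
    · intro h
      rw [piReal] at h
      simp only [RealVec3, Prod.mk.injEq, Prod.ext_iff, Prod.fst_zero, Prod.snd_zero,
        Complex.ofReal_eq_zero] at h
      obtain ⟨e1, e2, e3⟩ := h
      have hp := pvec_sq u
      rw [e1, e2, e3] at hp
      nlinarith [nsum_pos u hu]
    · rw [piReal]; simp [RealVec3]
    · rw [piReal]; simp [RealVec3]
    · rw [piReal]; simp [RealVec3]
  · -- (iii) fibers
    intro u u' hu hu'
    constructor
    · rintro ⟨c, hc, h⟩
      exact forward u u' hu c hc h
    · rintro (⟨a, ha, rfl⟩ | ⟨a, ha, rfl⟩)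
      · exact ⟨a * conj a, mul_ne_zero ha (by simpa using ha),
          by rw [sigma_smul, piMap_smul]⟩
      · refine ⟨-(a * conj a), by simpa using ha, ?_⟩
        rw [sigma_smul, sigma_sigma, show (-u : ℂ × ℂ) = (-1 : ℂ) • u from by simp,
          smul_smul, piMap_smul, piMap_comm (SigmaMap u) u, piMap_comm u (SigmaMap u)]
        congr 1
        ring
  · -- (iv)
    intro u hu
    rintro ⟨c, hc, h⟩
    apply hu
    simp only [SigmaMap, Prod.ext_iff, Prod.smul_fst, Prod.smul_snd, smul_eq_mul] at h
    obtain ⟨h1, h2⟩ := h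
    have h2' : u.1 = conj c * conj u.2 := by
      have := congrArg conj h2
      simpa [map_mul] using this
    have h1' : conj u.2 = -(c * u.1) := by linear_combination -h1
    have hu1 : u.1 * (1 + (Complex.normSq c : ℂ)) = 0 := by
      have hcc : conj c * c = (Complex.normSq c : ℂ) := by
        rw [mul_comm, Complex.mul_conj]
      linear_combination h2' + conj c * h1' - u.1 * hcc
    have hns : (1 + (Complex.normSq c : ℂ)) ≠ 0 := by
      have : ((1 + Complex.normSq c : ℝ) : ℂ) ≠ 0 :=
        Complex.ofReal_ne_zero.mpr (ne_of_gt (by nlinarith [Complex.normSq_nonneg c]))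
      push_cast at this
      exact this
    have e1 : u.1 = 0 := (mul_eq_zero.mp hu1).resolve_right hns
    have e2 : u.2 = 0 := by
      have : -(conj u.2) = 0 := by rw [h1, e1, mul_zero]
      simpa using this
    exact Prod.ext e1 e2
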